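/- Let G be a reflexive graph and suppose that an edge vv' of G avoids every edge of a walk u_0 u_1 … u_t in G, where t ≥ 1. If {u_0, u_1, v, v'} induces a C4 in G and {u_{t-1}, u_t, v, v'} does not induce a C4 in G, then for any y ∈ {v, v'}, (u_0, x) ~ (u_t, y), where x is the unique vertex in {v, v'} with u_0x ∈ E(G). -/
import Mathlib


/-!
Common definitions.  A reflexive graph on a finite vertex type `V` is given by a
symmetric, reflexive adjacency relation `adj : V → V → Prop`; the edge set consists
of all pairs (including loops `v v`) with `adj u v`.
-/

variable {V : Type*}

/-- `G` is a strong cocomparability graph: there is a linear (strict total) order on the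
vertices such that the correspondingly ordered adjacency matrix contains no `Slash`
submatrix (rows `01`, `10`). -/
def IsStrongCocomp (adj : V → V → Prop) : Prop :=
  ∃ lt : V → V → Prop, IsStrictTotalOrder V lt ∧
    ∀ u v x y : V, lt u v → lt x y →
      ¬(¬ adj u x ∧ adj u y ∧ adj v x ∧ ¬ adj v y)

/-- `G` is a cocomparability graph: it has a cocomparability ordering. -/
def IsCocomp (adj : V → V → Prop) : Prop :=
  ∃ lt : V → V → Prop, IsStrictTotalOrder V lt ∧
    ∀ x y z : V, lt x y → lt y z → adj x z → adj x y ∨ adj y z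

/-- `(u,v)` forces `(u',v')`:  either the pairs are equal, or `uu', vv'` are edges and
`uv', vu'` are non-edges. -/
def Forces (adj : V → V → Prop) (p q : V × V) : Prop :=
  p = q ∨ (adj p.1 q.1 ∧ adj p.2 q.2 ∧ ¬ adj p.1 q.2 ∧ ¬ adj p.2 q.1)

/-- `(u,v)` implies `(u',v')`: there are walks `u_0 … u_k` and `v_0 … v_k` (on pairs of
distinct vertices) with `(u_0,v_0) = (u,v)`, `(u_k,v_k) = (u',v')` and each pair forcing
the next. -/
def ImpliesRel (adj : V → V → Prop) (p q : V × V) : Prop :=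
  ∃ (k : ℕ) (u v : ℕ → V),
    (u 0, v 0) = p ∧ (u k, v k) = q ∧
    (∀ i < k, adj (u i) (u (i+1))) ∧
    (∀ i < k, adj (v i) (v (i+1))) ∧
    (∀ i ≤ k, u i ≠ v i) ∧
    (∀ i < k, Forces adj (u i, v i) (u (i+1), v (i+1)))

/-- An invertible pair: distinct vertices `u, v` with `(u,v) ~ (v,u)`. -/
def InvertiblePair (adj : V → V → Prop) (u v : V) : Prop :=
  u ≠ v ∧ ImpliesRel adj (u, v) (v, u)

/-- The ordered quadruple `a b c d` is (ignoring loops) an induced 4-cycle. -/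
def IsC4 (adj : V → V → Prop) (a b c d : V) : Prop :=
  adj a b ∧ adj b c ∧ adj c d ∧ adj d a ∧ ¬ adj a c ∧ ¬ adj b d

/-- The ordered quadruple `a b c d` is (ignoring loops) an induced path on 4 vertices. -/
def IsP4 (adj : V → V → Prop) (a b c d : V) : Prop :=
  adj a b ∧ adj b c ∧ adj c d ∧ ¬ adj a c ∧ ¬ adj a d ∧ ¬ adj b d

/-- The ordered quadruple `a b c d` is (ignoring loops) an induced `2K_2`
(edges `ab` and `cd` only). -/
def Is2K2 (adj : V → V → Prop) (a b c d : V) : Prop :=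
  adj a b ∧ adj c d ∧ ¬ adj a c ∧ ¬ adj a d ∧ ¬ adj b c ∧ ¬ adj b d

/-- The four vertices `a, b, c, d` are distinct and the set `{a,b,c,d}` induces a `C4`. -/
def InducesC4 (adj : V → V → Prop) (a b c d : V) : Prop :=
  [a, b, c, d].Nodup ∧
    ∃ p q r s : V, ({p, q, r, s} : Set V) = {a, b, c, d} ∧ IsC4 adj p q r s

/-- The four vertices `a, b, c, d` are distinct and the set `{a,b,c,d}` induces a `P4`. -/
def InducesP4 (adj : V → V → Prop) (a b c d : V) : Prop :=
  [a, b, c, d].Nodup ∧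
    ∃ p q r s : V, ({p, q, r, s} : Set V) = {a, b, c, d} ∧ IsP4 adj p q r s

/-- The four vertices `a, b, c, d` are distinct and the set `{a,b,c,d}` induces a `2K2`. -/
def Induces2K2 (adj : V → V → Prop) (a b c d : V) : Prop :=
  [a, b, c, d].Nodup ∧
    ∃ p q r s : V, ({p, q, r, s} : Set V) = {a, b, c, d} ∧ Is2K2 adj p q r s

/-- The edge `uu'` avoids the edge `vv'` (both possibly loops, with
`{u,u'} ∩ {v,v'} = ∅`). -/
def Avoids (adj : V → V → Prop) (u u' v v' : V) : Prop :=
  (u ≠ v ∧ u ≠ v' ∧ u' ≠ v ∧ u' ≠ v') ∧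
  ((u = u' ∧ v = v' ∧ ¬ adj u v) ∨
   (u = u' ∧ v ≠ v' ∧ ¬ adj u v ∧ ¬ adj u v') ∨
   (u ≠ u' ∧ v = v' ∧ ¬ adj u v ∧ ¬ adj u' v) ∨
   (u ≠ u' ∧ v ≠ v' ∧
     (Induces2K2 adj u u' v v' ∨ InducesP4 adj u u' v v' ∨ InducesC4 adj u u' v v')))

/-- `w 0, w 1, …, w t` is a walk in `G`. -/
def IsWalkOn (adj : V → V → Prop) (t : ℕ) (w : ℕ → V) : Prop :=
  ∀ i < t, adj (w i) (w (i+1))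

/-- The edge `xy` avoids every edge of the walk `w 0, …, w t`. -/
def EdgeAvoidsWalk (adj : V → V → Prop) (x y : V) (t : ℕ) (w : ℕ → V) : Prop :=
  ∀ i < t, Avoids adj x y (w i) (w (i+1))

/-- A weak edge-asteroid: edges `x_i y_i`, `i ∈ ZMod (2k+1)`, such that each `x_i y_i`
avoids a walk beginning with the edge `x_{i+k} y_{i+k}` and ending with the edge
`x_{i+k+1} y_{i+k+1}`. -/
def WeakEdgeAsteroid (adj : V → V → Prop) (k : ℕ) (x y : ZMod (2*k+1) → V) : Prop :=
  (∀ i, adj (x i) (y i)) ∧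
  ∀ i : ZMod (2*k+1), ∃ (t : ℕ) (w : ℕ → V), 1 ≤ t ∧
    IsWalkOn adj t w ∧
    ((w 0 = x (i + (k : ZMod (2*k+1))) ∧ w 1 = y (i + (k : ZMod (2*k+1)))) ∨
     (w 0 = y (i + (k : ZMod (2*k+1))) ∧ w 1 = x (i + (k : ZMod (2*k+1))))) ∧
    ((w (t-1) = x (i + (k : ZMod (2*k+1)) + 1) ∧ w t = y (i + (k : ZMod (2*k+1)) + 1)) ∨
     (w (t-1) = y (i + (k : ZMod (2*k+1)) + 1) ∧ w t = x (i + (k : ZMod (2*k+1)) + 1))) ∧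
    EdgeAvoidsWalk adj (x i) (y i) t w

/-- An asteroid: vertices `x_i`, `i ∈ ZMod (2k+1)`, such that for each `i` there is a walk
connecting `x_{i+k}` and `x_{i+k+1}` containing no neighbour of `x_i`. -/
def Asteroid (adj : V → V → Prop) (k : ℕ) (x : ZMod (2*k+1) → V) : Prop :=
  ∀ i : ZMod (2*k+1), ∃ (t : ℕ) (w : ℕ → V),
    w 0 = x (i + (k : ZMod (2*k+1))) ∧ w t = x (i + (k : ZMod (2*k+1)) + 1) ∧
    IsWalkOn adj t w ∧
    ∀ j ≤ t, ¬ adj (x i) (w j)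

/-- A bigraph with biadjacency relation `A` is a cocomparability bigraph: its biadjacency
matrix has a `Slash`-free ordering. -/
def IsCocompBigraph {X Y : Type*} (A : X → Y → Prop) : Prop :=
  ∃ (ltX : X → X → Prop) (ltY : Y → Y → Prop),
    IsStrictTotalOrder X ltX ∧ IsStrictTotalOrder Y ltY ∧
    ∀ x1 x2 y1 y2, ltX x1 x2 → ltY y1 y2 →
      ¬(¬ A x1 y1 ∧ A x1 y2 ∧ A x2 y1 ∧ ¬ A x2 y2)

/-- The edge set of `G` (as unordered pairs, including loops). -/
def GEdgeSet (adj : V → V → Prop) : Set (Sym2 V) := {e | ∃ u v, e = s(u, v) ∧ adj u v}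

/-- Adjacency in the avoidance graph `G*`: two edges of `G` are adjacent iff they avoid
each other. -/
def AdjStar (adj : V → V → Prop) (e f : Sym2 V) : Prop :=
  ∃ u u' v v', e = s(u, u') ∧ f = s(v, v') ∧ Avoids adj u u' v v'


section AlignHelpers

variable {V : Type*} {adj : V → V → Prop}

private lemma impliesRel_refl' {p : V × V} (h : p.1 ≠ p.2) : ImpliesRel adj p p := by
  refine ⟨0, fun _ => p.1, fun _ => p.2, rfl, rfl, ?_, ?_, ?_, ?_⟩
  · intro i hi; omega
  · intro i hi; omega
  · intro i _; exact h
  · intro i hi; omega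

private lemma impliesRel_cons {a b : V} {q r : V × V} (h5 : a ≠ b)
    (ha : adj a q.1) (hb : adj b q.2) (hf : Forces adj (a, b) q)
    (h : ImpliesRel adj q r) : ImpliesRel adj (a, b) r := by
  obtain ⟨k, u, w, hs, he, hu, hw, hd, hf2⟩ := h
  have hsu : u 0 = q.1 := congrArg Prod.fst hs
  have hsw : w 0 = q.2 := congrArg Prod.snd hs
  refine ⟨k + 1, fun i => if i = 0 then a else u (i - 1),
    fun i => if i = 0 then b else w (i - 1), by simp, ?_, ?_, ?_, ?_, ?_⟩
  · simpa using he
  · intro i hi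
    rcases Nat.eq_zero_or_pos i with rfl | hpos
    · simpa [hsu] using ha
    · have h1 : i ≠ 0 := by omega
      have h2 : i + 1 ≠ 0 := by omega
      simp only [h1, h2, if_neg, ite_false]
      have : i + 1 - 1 = (i - 1) + 1 := by omega
      rw [this]
      exact hu (i - 1) (by omega)
  · intro i hi
    rcases Nat.eq_zero_or_pos i with rfl | hpos
    · simpa [hsw] using hb
    · have h1 : i ≠ 0 := by omega
      have h2 : i + 1 ≠ 0 := by omega
      simp only [h1, h2, if_neg, ite_false]
      have : i + 1 - 1 = (i - 1) + 1 := by omega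
      rw [this]
      exact hw (i - 1) (by omega)
  · intro i hi
    rcases Nat.eq_zero_or_pos i with rfl | hpos
    · simpa using h5
    · have h1 : i ≠ 0 := by omega
      simp only [h1, ite_false]
      exact hd (i - 1) (by omega)
  · intro i hi
    rcases Nat.eq_zero_or_pos i with rfl | hpos
    · simp only [show (0:ℕ) ≠ 0 ↔ False from by simp, if_pos rfl, if_neg Nat.one_ne_zero]
      have : (1 : ℕ) - 1 = 0 := rfl
      rw [this, hsu, hsw]
      simpa using hf
    · have h1 : i ≠ 0 := by omega
      have h2 : i + 1 ≠ 0 := by omega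
      simp only [h1, h2, if_neg, ite_false]
      have : i + 1 - 1 = (i - 1) + 1 := by omega
      rw [this]
      exact hf2 (i - 1) (by omega)

private lemma impliesRel_cons' {a b c d : V} {r : V × V} (h5 : a ≠ b)
    (ha : adj a c) (hb : adj b d) (h3 : ¬ adj a d) (h4 : ¬ adj b c)
    (h : ImpliesRel adj (c, d) r) : ImpliesRel adj (a, b) r :=
  impliesRel_cons h5 ha hb (Or.inr ⟨ha, hb, h3, h4⟩) h

/-- In each of the three avoiding patterns, every vertex of the quadruple has a
non-neighbour among the quadruple. -/
private lemma inducesAny_nonnbr (hrefl : Reflexive adj) (hsymm : Symmetric adj)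
    {a b c d : V}
    (h : Induces2K2 adj a b c d ∨ InducesP4 adj a b c d ∨ InducesC4 adj a b c d) :
    ∀ x, (x = a ∨ x = b ∨ x = c ∨ x = d) →
      ∃ z, (z = a ∨ z = b ∨ z = c ∨ z = d) ∧ z ≠ x ∧ ¬ adj x z ∧ ¬ adj z x := by
  have hex : ∃ p q r s : V, ({p, q, r, s} : Set V) = {a, b, c, d} ∧
      ¬ adj p r ∧ ¬ adj q s := by
    rcases h with ⟨_, p, q, r, s, hset, hp⟩ | ⟨_, p, q, r, s, hset, hp⟩ |
      ⟨_, p, q, r, s, hset, hp⟩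
    · exact ⟨p, q, r, s, hset, hp.2.2.1, hp.2.2.2.2.2⟩
    · exact ⟨p, q, r, s, hset, hp.2.2.2.1, hp.2.2.2.2.2⟩
    · exact ⟨p, q, r, s, hset, hp.2.2.2.2.1, hp.2.2.2.2.2⟩
  obtain ⟨p, q, r, s, hset, hpr, hqs⟩ := hex
  have hmem : ∀ x : V, (x = p ∨ x = q ∨ x = r ∨ x = s) ↔
      (x = a ∨ x = b ∨ x = c ∨ x = d) := by
    intro x
    have := Set.ext_iff.mp hset x
    simpa using this
  intro x hx
  rcases (hmem x).mpr hx with rfl | rfl | rfl | rfl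
  · refine ⟨r, (hmem r).mp (by tauto), ?_, hpr, fun h => hpr (hsymm h)⟩
    intro h; rw [h] at hpr; exact hpr (hrefl x)
  · refine ⟨s, (hmem s).mp (by tauto), ?_, hqs, fun h => hqs (hsymm h)⟩
    intro h; rw [h] at hqs; exact hqs (hrefl x)
  · refine ⟨p, (hmem p).mp (by tauto), ?_, fun h => hpr (hsymm h), hpr⟩
    intro h; rw [h] at hpr; exact hpr (hrefl x)
  · refine ⟨q, (hmem q).mp (by tauto), ?_, fun h => hqs (hsymm h), hqs⟩
    intro h; rw [h] at hqs; exact hqs (hrefl x)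

/-- In an induced `C4`, every vertex has a unique non-neighbour among the quadruple
and is adjacent to the remaining two vertices. -/
private lemma inducesC4_struct (hrefl : Reflexive adj) (hsymm : Symmetric adj)
    {a b c d : V} (h : InducesC4 adj a b c d) :
    ∀ x, (x = a ∨ x = b ∨ x = c ∨ x = d) →
      ∃ z, (z = a ∨ z = b ∨ z = c ∨ z = d) ∧ z ≠ x ∧ ¬ adj x z ∧ ¬ adj z x ∧
        ∀ w, (w = a ∨ w = b ∨ w = c ∨ w = d) → w ≠ x → w ≠ z → adj x w ∧ adj w x := by
  obtain ⟨hnd, p, q, r, s, hset, h1, h2, h3, h4, h5, h6⟩ := h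
  have hmem : ∀ x : V, (x = p ∨ x = q ∨ x = r ∨ x = s) ↔
      (x = a ∨ x = b ∨ x = c ∨ x = d) := by
    intro x
    have := Set.ext_iff.mp hset x
    simpa using this
  have hpr : p ≠ r := by intro h; rw [h] at h5; exact h5 (hrefl r)
  have hqs : q ≠ s := by intro h; rw [h] at h6; exact h6 (hrefl s)
  have hpq : p ≠ q := by intro h; rw [h] at h5; exact h5 h2
  have hqr : q ≠ r := by intro h; rw [← h] at h5; exact h5 h1
  have hrs : r ≠ s := by intro h; rw [← h] at h6; exact h6 h2
  have hps : p ≠ s := by intro h; rw [← h] at h6; exact h6 (hsymm h1)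
  intro x hx
  rcases (hmem x).mpr hx with rfl | rfl | rfl | rfl
  · refine ⟨r, (hmem r).mp (by tauto), Ne.symm hpr, h5, fun h => h5 (hsymm h), ?_⟩
    intro w hw hwx hwz
    rcases (hmem w).mpr hw with rfl | rfl | rfl | rfl
    · exact absurd rfl hwx
    · exact ⟨h1, hsymm h1⟩
    · exact absurd rfl hwz
    · exact ⟨hsymm h4, h4⟩
  · refine ⟨s, (hmem s).mp (by tauto), Ne.symm hqs, h6, fun h => h6 (hsymm h), ?_⟩
    intro w hw hwx hwz
    rcases (hmem w).mpr hw with rfl | rfl | rfl | rfl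
    · exact ⟨hsymm h1, h1⟩
    · exact absurd rfl hwx
    · exact ⟨h2, hsymm h2⟩
    · exact absurd rfl hwz
  · refine ⟨p, (hmem p).mp (by tauto), hpr, fun h => h5 (hsymm h), h5, ?_⟩
    intro w hw hwx hwz
    rcases (hmem w).mpr hw with rfl | rfl | rfl | rfl
    · exact absurd rfl hwz
    · exact ⟨hsymm h2, h2⟩
    · exact absurd rfl hwx
    · exact ⟨h3, hsymm h3⟩
  · refine ⟨q, (hmem q).mp (by tauto), hqs, fun h => h6 (hsymm h), h6, ?_⟩
    intro w hw hwx hwz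
    rcases (hmem w).mpr hw with rfl | rfl | rfl | rfl
    · exact ⟨h4, hsymm h4⟩
    · exact absurd rfl hwz
    · exact ⟨hsymm h3, h3⟩
    · exact absurd rfl hwx

private lemma nodup_four {a b c d : V} (h : [a, b, c, d].Nodup) :
    a ≠ b ∧ a ≠ c ∧ a ≠ d ∧ b ≠ c ∧ b ≠ d ∧ c ≠ d := by
  simp [List.nodup_cons] at h
  tauto

/-- Extract the cross pattern from an induced `C4` on `{a,b,v,v'}` with edges `ab`, `vv'`. -/
private lemma inducesC4_cross (hrefl : Reflexive adj) (hsymm : Symmetric adj)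
    {a b v v' : V} (h : InducesC4 adj a b v v') (hab : adj a b) (hvv : adj v v') :
    (adj a v ∧ adj b v' ∧ ¬ adj a v' ∧ ¬ adj b v) ∨
    (adj a v' ∧ adj b v ∧ ¬ adj a v ∧ ¬ adj b v') := by
  obtain ⟨hd1, hd2, hd3, hd4, hd5, hd6⟩ := nodup_four h.1
  have S := inducesC4_struct hrefl hsymm h
  obtain ⟨za, hza_mem, hza_ne, hna, hna', halla⟩ := S a (Or.inl rfl)
  obtain ⟨zb, hzb_mem, hzb_ne, hnb, hnb', hallb⟩ := S b (Or.inr (Or.inl rfl))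
  have hza_ne_b : za ≠ b := by intro h; rw [h] at hna; exact hna hab
  have hzb_ne_a : zb ≠ a := by intro h; rw [h] at hnb; exact hnb (hsymm hab)
  have hza_vv : za = v ∨ za = v' := by
    rcases hza_mem with h | h | h | h
    · exact absurd h hza_ne
    · exact absurd h hza_ne_b
    · exact Or.inl h
    · exact Or.inr h
  have hzb_vv : zb = v ∨ zb = v' := by
    rcases hzb_mem with h | h | h | h
    · exact absurd h hzb_ne_a
    · exact absurd h hzb_ne
    · exact Or.inl h
    · exact Or.inr h
  have hne : za ≠ zb := by
    intro he
    obtain ⟨z, hz_mem, hz_ne, hnz, hnz', hallz⟩ := S za hza_mem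
    have hane : a ≠ za := Ne.symm hza_ne
    have hbne : b ≠ za := by
      rcases hza_vv with h | h <;> rw [h]
      · exact hd4
      · exact hd5
    rw [← he] at hnb
    by_cases hza : z = a
    · subst hza
      exact hnb (hallz b (Or.inr (Or.inl rfl)) hbne (Ne.symm hd1)).2
    · exact hna (hallz a (Or.inl rfl) hane (Ne.symm hza)).2
  rcases hza_vv with h | h <;> rcases hzb_vv with h' | h'
  · rw [h, h'] at hne; exact absurd rfl hne
  · rw [h] at hna hne halla
    rw [h'] at hnb hne hallb
    refine Or.inr ⟨?_, ?_, hna, hnb⟩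
    · exact (halla v' (Or.inr (Or.inr (Or.inr rfl))) (Ne.symm hd3) hne.symm).1
    · exact (hallb v (Or.inr (Or.inr (Or.inl rfl))) (Ne.symm hd4) hne).1
  · rw [h] at hna hne halla
    rw [h'] at hnb hne hallb
    refine Or.inl ⟨?_, ?_, hna, hnb⟩
    · exact (halla v (Or.inr (Or.inr (Or.inl rfl))) (Ne.symm hd2) hne.symm).1
    · exact (hallb v' (Or.inr (Or.inr (Or.inr rfl))) (Ne.symm hd5) hne).1
  · rw [h, h'] at hne; exact absurd rfl hne

/-- Build an induced `C4` from the cross pattern. -/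
private lemma cross_c4 (hsymm : Symmetric adj) {a b v v' : V}
    (hab' : a ≠ b) (hav : a ≠ v) (hav' : a ≠ v') (hbv : b ≠ v) (hbv' : b ≠ v')
    (hvv' : v ≠ v')
    (hab : adj a b) (hvv : adj v v') (h1 : adj a v) (h2 : adj b v')
    (h3 : ¬ adj a v') (h4 : ¬ adj b v) : InducesC4 adj a b v v' := by
  refine ⟨?_, v, a, b, v', ?_, hsymm h1, hab, h2, hsymm hvv,
    fun h => h4 (hsymm h), h3⟩
  · simp only [List.nodup_cons, List.mem_cons, List.not_mem_nil, or_false,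
      List.nodup_nil, and_true, List.mem_singleton]
    refine ⟨?_, ?_, ?_⟩ <;> push_neg <;> tauto
  · ext x; simp only [Set.mem_insert_iff, Set.mem_singleton_iff]; tauto

/-- Build an induced `C4` from the swapped cross pattern. -/
private lemma cross_c4' (hsymm : Symmetric adj) {a b v v' : V}
    (hab' : a ≠ b) (hav : a ≠ v) (hav' : a ≠ v') (hbv : b ≠ v) (hbv' : b ≠ v')
    (hvv' : v ≠ v')
    (hab : adj a b) (hvv : adj v v') (h1 : adj a v') (h2 : adj b v)
    (h3 : ¬ adj a v) (h4 : ¬ adj b v') : InducesC4 adj a b v v' := by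
  refine ⟨?_, v', a, b, v, ?_, hsymm h1, hab, h2, hvv,
    fun h => h4 (hsymm h), h3⟩
  · simp only [List.nodup_cons, List.mem_cons, List.not_mem_nil, or_false,
      List.nodup_nil, and_true, List.mem_singleton]
    refine ⟨?_, ?_, ?_⟩ <;> push_neg <;> tauto
  · ext x; simp only [Set.mem_insert_iff, Set.mem_singleton_iff]; tauto

/-- Structure of an avoiding step: each endpoint of the walk edge is distinct from
`v, v'` and no two cross edges coexist. -/
private lemma avoids_cross (hrefl : Reflexive adj) (hsymm : Symmetric adj)
    {v v' a b : V} (hvv' : v ≠ v')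
    (hA : Avoids adj v v' a b) (hab : adj a b) (hvv : adj v v') :
    a ≠ v ∧ a ≠ v' ∧ b ≠ v ∧ b ≠ v' ∧
    ¬(adj a v ∧ adj a v') ∧ ¬(adj b v ∧ adj b v') ∧
    ¬(adj a v ∧ adj b v) ∧ ¬(adj a v' ∧ adj b v') := by
  obtain ⟨⟨d1, d2, d3, d4⟩, hcase⟩ := hA
  refine ⟨Ne.symm d1, Ne.symm d3, Ne.symm d2, Ne.symm d4, ?_⟩
  rcases hcase with ⟨he, _⟩ | ⟨he, _⟩ | ⟨_, he, hna, hnb⟩ | ⟨_, hne, hI⟩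
  · exact absurd he hvv'
  · exact absurd he hvv'
  · subst he
    refine ⟨?_, ?_, ?_, ?_⟩ <;> rintro ⟨g1, g2⟩
    · exact hna (hsymm g1)
    · exact hna (hsymm g1)
    · exact hna (hsymm g1)
    · exact hnb (hsymm g1)
  · have nn := inducesAny_nonnbr hrefl hsymm hI
    refine ⟨?_, ?_, ?_, ?_⟩ <;> rintro ⟨g1, g2⟩
    · obtain ⟨z, hz, hzne, hn1, hn2⟩ := nn a (Or.inr (Or.inr (Or.inl rfl)))
      rcases hz with rfl | rfl | rfl | rfl
      · exact hn1 g1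
      · exact hn1 g2
      · exact absurd rfl hzne
      · exact hn1 hab
    · obtain ⟨z, hz, hzne, hn1, hn2⟩ := nn b (Or.inr (Or.inr (Or.inr rfl)))
      rcases hz with rfl | rfl | rfl | rfl
      · exact hn1 g1
      · exact hn1 g2
      · exact hn1 (hsymm hab)
      · exact absurd rfl hzne
    · obtain ⟨z, hz, hzne, hn1, hn2⟩ := nn v (Or.inl rfl)
      rcases hz with rfl | rfl | rfl | rfl
      · exact absurd rfl hzne
      · exact hn1 hvv
      · exact hn1 (hsymm g1)
      · exact hn1 (hsymm g2)
    · obtain ⟨z, hz, hzne, hn1, hn2⟩ := nn v' (Or.inr (Or.inl rfl))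
      rcases hz with rfl | rfl | rfl | rfl
      · exact hn2 hvv
      · exact absurd rfl hzne
      · exact hn1 (hsymm g1)
      · exact hn1 (hsymm g2)

/-- Main induction: propagate an implication chain along the avoided walk. -/
private lemma align_main (hsymm : Symmetric adj) (hrefl : Reflexive adj)
    {v v' : V} (hvv' : v ≠ v') (hedge : adj v v') :
    ∀ n (u : ℕ → V), IsWalkOn adj (n+1) u → EdgeAvoidsWalk adj v v' (n+1) u →
      ¬ (adj (u n) v ∧ adj (u (n+1)) v') → ¬ (adj (u n) v' ∧ adj (u (n+1)) v) →
      ∀ z0, (z0 = v ∨ z0 = v') → ¬ adj z0 (u 1) →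
      ∀ y, (y = v ∨ y = v') → ImpliesRel adj (u 0, z0) (u (n+1), y) := by
  have adj2 : ∀ p q : V, (p = v ∨ p = v') → (q = v ∨ q = v') → adj p q := by
    rintro p q (rfl | rfl) (rfl | rfl)
    exacts [hrefl _, hedge, hsymm hedge, hrefl _]
  intro n
  induction n with
  | zero =>
    intro u hwalk havoid hl1 hl2 z0 hz0 hz0u1 y hy
    obtain ⟨ne0v, ne0v', ne1v, ne1v', nb0, nb1, nsv, nsv'⟩ :=
      avoids_cross hrefl hsymm hvv' (havoid 0 (by omega)) (hwalk 0 (by omega)) hedge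
    have hu01 : adj (u 0) (u 1) := hwalk 0 (by omega)
    have hne0 : u 0 ≠ z0 := by rcases hz0 with rfl | rfl; exacts [ne0v, ne0v']
    have hne1 : ∀ w, (w = v ∨ w = v') → u 1 ≠ w := by
      rintro w (rfl | rfl); exacts [ne1v, ne1v']
    by_cases hcb : ¬ adj (u 1) v ∧ ¬ adj (u 1) v'
    · -- u 1 has no cross neighbour
      obtain ⟨w1, hw1, hw1n⟩ : ∃ w1, (w1 = v ∨ w1 = v') ∧ ¬ adj (u 0) w1 := by
        by_cases h : adj (u 0) v
        · exact ⟨v', Or.inr rfl, fun hh => nb0 ⟨h, hh⟩⟩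
        · exact ⟨v, Or.inl rfl, h⟩
      have step1 : ImpliesRel adj (u 1, w1) (u 1, y) := by
        by_cases hwy : w1 = y
        · subst hwy; exact impliesRel_refl' (hne1 w1 hw1)
        · refine impliesRel_cons' (hne1 w1 hw1) (hrefl _) (adj2 w1 y hw1 hy) ?_ ?_
            (impliesRel_refl' (hne1 y hy))
          · rcases hy with rfl | rfl; exacts [hcb.1, hcb.2]
          · intro hh
            have : adj (u 1) w1 := hsymm hh
            rcases hw1 with rfl | rfl; exacts [hcb.1 this, hcb.2 this]
      exact impliesRel_cons' hne0 hu01 (adj2 z0 w1 hz0 hw1) hw1n hz0u1 step1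
    · -- u 1 has a cross neighbour, so u 0 has none
      push_neg at hcb
      have hc0 : ¬ adj (u 0) v ∧ ¬ adj (u 0) v' := by
        by_cases h1v : adj (u 1) v
        · constructor
          · intro h; exact nsv ⟨h, h1v⟩
          · intro h; exact hl2 ⟨h, h1v⟩
        · have h1v' := hcb h1v
          constructor
          · intro h; exact hl1 ⟨h, h1v'⟩
          · intro h; exact nsv' ⟨h, h1v'⟩
      refine impliesRel_cons' hne0 hu01 (adj2 z0 y hz0 hy) ?_ hz0u1
        (impliesRel_refl' (hne1 y hy))
      rcases hy with rfl | rfl; exacts [hc0.1, hc0.2]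
  | succ m ih =>
    intro u hwalk havoid hl1 hl2 z0 hz0 hz0u1 y hy
    obtain ⟨ne0v, ne0v', ne1v, ne1v', nb0, nb1, nsv, nsv'⟩ :=
      avoids_cross hrefl hsymm hvv' (havoid 0 (by omega)) (hwalk 0 (by omega)) hedge
    obtain ⟨_, _, ne2v, ne2v', _, nb2, nsv1, nsv1'⟩ :=
      avoids_cross hrefl hsymm hvv' (havoid 1 (by omega)) (hwalk 1 (by omega)) hedge
    have hu01 : adj (u 0) (u 1) := hwalk 0 (by omega)
    have hne0 : u 0 ≠ z0 := by rcases hz0 with rfl | rfl; exacts [ne0v, ne0v']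
    have hne1 : ∀ w, (w = v ∨ w = v') → u 1 ≠ w := by
      rintro w (rfl | rfl); exacts [ne1v, ne1v']
    set us : ℕ → V := fun i => u (i + 1) with hus
    have hwalk' : IsWalkOn adj (m+1) us := fun i hi => hwalk (i+1) (by omega)
    have havoid' : EdgeAvoidsWalk adj v v' (m+1) us := fun i hi => havoid (i+1) (by omega)
    have hl1' : ¬ (adj (us m) v ∧ adj (us (m+1)) v') := hl1
    have hl2' : ¬ (adj (us m) v' ∧ adj (us (m+1)) v) := hl2
    have IH := ih us hwalk' havoid' hl1' hl2'
    by_cases h1v : adj (u 1) v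
    · -- z1 = v
      have hz1u2 : ¬ adj v (u 2) := fun h => nsv1 ⟨h1v, hsymm h⟩
      have h0v : ¬ adj (u 0) v := fun h => nsv ⟨h, h1v⟩
      exact impliesRel_cons' hne0 hu01 (adj2 z0 v hz0 (Or.inl rfl)) h0v hz0u1
        (IH v (Or.inl rfl) hz1u2 y hy)
    · by_cases h1v' : adj (u 1) v'
      · -- z1 = v'
        have hz1u2 : ¬ adj v' (u 2) := fun h => nsv1' ⟨h1v', hsymm h⟩
        have h0v' : ¬ adj (u 0) v' := fun h => nsv' ⟨h, h1v'⟩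
        exact impliesRel_cons' hne0 hu01 (adj2 z0 v' hz0 (Or.inr rfl)) h0v' hz0u1
          (IH v' (Or.inr rfl) hz1u2 y hy)
      · -- u 1 has no cross neighbour: free choice at u 1
        obtain ⟨z1, hz1, hz1n⟩ : ∃ z1, (z1 = v ∨ z1 = v') ∧ ¬ adj z1 (u 2) := by
          by_cases h : adj (u 2) v
          · exact ⟨v', Or.inr rfl, fun hh => nb2 ⟨h, hsymm hh⟩⟩
          · exact ⟨v, Or.inl rfl, fun hh => h (hsymm hh)⟩
        obtain ⟨w1, hw1, hw1n⟩ : ∃ w1, (w1 = v ∨ w1 = v') ∧ ¬ adj (u 0) w1 := by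
          by_cases h : adj (u 0) v
          · exact ⟨v', Or.inr rfl, fun hh => nb0 ⟨h, hh⟩⟩
          · exact ⟨v, Or.inl rfl, h⟩
        have tail : ImpliesRel adj (u 1, w1) (u (m+1+1), y) := by
          by_cases hwz : w1 = z1
          · subst hwz; exact IH w1 hw1 hz1n y hy
          · refine impliesRel_cons' (hne1 w1 hw1) (hrefl _) (adj2 w1 z1 hw1 hz1) ?_ ?_
              (IH z1 hz1 hz1n y hy)
            · rcases hz1 with rfl | rfl; exacts [h1v, h1v']
            · intro hh
              have : adj (u 1) w1 := hsymm hh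
              rcases hw1 with rfl | rfl; exacts [h1v this, h1v' this]
        exact impliesRel_cons' hne0 hu01 (adj2 z0 w1 hz0 hw1) hw1n hz0u1 tail

end AlignHelpers

/-- **Lemma (Statement 4).** If the edge `vv'` avoids the walk `u 0, u 1, …, u t` (`t ≥ 1`),
`{u 0, u 1, v, v'}` induces a `C4` and `{u (t-1), u t, v, v'}` does not, then for any
`y ∈ {v,v'}` we have `(u 0, x) ~ (u t, y)`, where `x` is the (unique) vertex of `{v,v'}`
adjacent to `u 0`. -/
theorem align_C4_start
    {V : Type*} [Fintype V] (adj : V → V → Prop)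
    (hsymm : Symmetric adj) (hrefl : Reflexive adj)
    (v v' : V) (hedge : adj v v')
    (t : ℕ) (ht : 1 ≤ t) (u : ℕ → V)
    (hwalk : IsWalkOn adj t u)
    (havoid : EdgeAvoidsWalk adj v v' t u)
    (h1 : InducesC4 adj (u 0) (u 1) v v')
    (h2 : ¬ InducesC4 adj (u (t-1)) (u t) v v') :
    ∀ x : V, (x = v ∨ x = v') → adj (u 0) x →
      ∀ y : V, (y = v ∨ y = v') →
        ImpliesRel adj (u 0, x) (u t, y) := by
  intro x hx hux y hy
  obtain ⟨n, rfl⟩ : ∃ n, t = n + 1 := ⟨t - 1, by omega⟩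
  have hvv' : v ≠ v' := (nodup_four h1.1).2.2.2.2.2
  have hu01 : adj (u 0) (u 1) := hwalk 0 (by omega)
  have hC4 := inducesC4_cross hrefl hsymm h1 hu01 hedge
  obtain ⟨nenv, nenv', nen1v, nen1v', nbn, nbn1, nssv, nssv'⟩ :=
    avoids_cross hrefl hsymm hvv' (havoid n (by omega)) (hwalk n (by omega)) hedge
  have h2' : ¬ InducesC4 adj (u n) (u (n+1)) v v' := by simpa using h2
  have hl1 : ¬ (adj (u n) v ∧ adj (u (n+1)) v') := by
    rintro ⟨g1, g2⟩
    have hn1v : ¬ adj (u (n+1)) v := fun h => nssv ⟨g1, h⟩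
    have hnv' : ¬ adj (u n) v' := fun h => nbn ⟨g1, h⟩
    have hne : u n ≠ u (n+1) := fun he => hn1v (he ▸ g1)
    exact h2' (cross_c4 hsymm hne nenv nenv' nen1v nen1v' hvv'
      (hwalk n (by omega)) hedge g1 g2 hnv' hn1v)
  have hl2 : ¬ (adj (u n) v' ∧ adj (u (n+1)) v) := by
    rintro ⟨g1, g2⟩
    have hn1v' : ¬ adj (u (n+1)) v' := fun h => nssv' ⟨g1, h⟩
    have hnv : ¬ adj (u n) v := fun h => nbn ⟨h, g1⟩
    have hne : u n ≠ u (n+1) := fun he => hn1v' (he ▸ g1)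
    exact h2' (cross_c4' hsymm hne nenv nenv' nen1v nen1v' hvv'
      (hwalk n (by omega)) hedge g1 g2 hnv hn1v')
  have hz0u1 : ¬ adj x (u 1) := by
    rcases hC4 with ⟨p1, p2, p3, p4⟩ | ⟨p1, p2, p3, p4⟩
    · rcases hx with rfl | rfl
      · exact fun h => p4 (hsymm h)
      · exact absurd hux p3
    · rcases hx with rfl | rfl
      · exact absurd hux p3
      · exact fun h => p4 (hsymm h)
  exact align_main hsymm hrefl hvv' hedge n u hwalk havoid hl1 hl2 x hx hz0u1 y hy
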